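/- Let P1, P2 ∈ [0,1] and let q1, q2 be positive integers. Define the packet drop probability of the two-hop semi-cumulative strategy as pdp_SC = P1^{q1} + ∑_{i=1}^{q1} (1−P1)·P1^{i−1}·P2^{q2 + q1 − i}, and the packet drop probability of the two-hop non-cooperative strategy as pdp_NC = 1 − (1 − P1^{q1})(1 − P2^{q2}). Then pdp_SC ≤ pdp_NC. -/

import Mathlib

/-- Two-hop semi-cumulative packet drop probability. -/
noncomputable def pdpSC (P1 P2 : ℝ) (q1 q2 : ℕ) : ℝ :=
  P1 ^ q1 + ∑ i ∈ Finset.Icc 1 q1, (1 - P1) * P1 ^ (i - 1) * P2 ^ (q2 + q1 - i)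

/-- Two-hop non-cooperative packet drop probability. -/
noncomputable def pdpNC (P1 P2 : ℝ) (q1 q2 : ℕ) : ℝ :=
  1 - (1 - P1 ^ q1) * (1 - P2 ^ q2)

/-- The semi-cumulative strategy never has a larger packet drop probability than
the non-cooperative strategy in a two-hop network. -/
theorem pdpSC_le_pdpNC (P1 P2 : ℝ) (hP1 : P1 ∈ Set.Icc (0:ℝ) 1) (hP2 : P2 ∈ Set.Icc (0:ℝ) 1)
    (q1 q2 : ℕ) (hq1 : 0 < q1) (hq2 : 0 < q2) :
    pdpSC P1 P2 q1 q2 ≤ pdpNC P1 P2 q1 q2 := by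
  obtain ⟨h10, h11⟩ := hP1
  obtain ⟨h20, h21⟩ := hP2
  have hstep : ∑ i ∈ Finset.Icc 1 q1, (1 - P1) * P1 ^ (i - 1) * P2 ^ (q2 + q1 - i)
      ≤ ∑ i ∈ Finset.Icc 1 q1, (1 - P1) * P1 ^ (i - 1) * P2 ^ q2 := by
    apply Finset.sum_le_sum
    intro i hi
    rw [Finset.mem_Icc] at hi
    have hle : q2 ≤ q2 + q1 - i := by omega
    have := pow_le_pow_of_le_one h20 h21 hle
    have hnn : 0 ≤ (1 - P1) * P1 ^ (i - 1) :=
      mul_nonneg (by linarith) (pow_nonneg h10 _)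
    exact mul_le_mul_of_nonneg_left this hnn
  have hsum : ∑ i ∈ Finset.Icc 1 q1, (1 - P1) * P1 ^ (i - 1) * P2 ^ q2
      = (1 - P1 ^ q1) * P2 ^ q2 := by
    have h1 : ∑ i ∈ Finset.Icc 1 q1, (1 - P1) * P1 ^ (i - 1) * P2 ^ q2
        = ∑ i ∈ Finset.range q1, (1 - P1) * P1 ^ i * P2 ^ q2 := by
      rw [show Finset.Icc 1 q1 = Finset.Ico 1 (q1+1) by rfl, Finset.sum_Ico_eq_sum_range]
      simp
    rw [h1, ← Finset.sum_mul, ← Finset.mul_sum]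
    have := geom_sum_mul P1 q1
    linear_combination P2 ^ q2 * (-this)
  have key : ∑ i ∈ Finset.Icc 1 q1, (1 - P1) * P1 ^ (i - 1) * P2 ^ (q2 + q1 - i)
      ≤ (1 - P1 ^ q1) * P2 ^ q2 := hsum ▸ hstep
  unfold pdpSC pdpNC
  nlinarith [key]
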